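/- (Lemma 5.1, symmetric Dirichlet case.) Let B ≥ 0, let c > 0 satisfy c⁴ + Bc³ − 1 = 0, and let P, Q ∈ ℝ^{d×d} be symmetric positive definite matrices with ‖P − P⁻³‖ ≤ B and ‖Q − Q⁻³‖ ≤ B (Frobenius norm, P⁻³ = (P⁻¹)³). Then ‖(P − P⁻³) − (Q − Q⁻³)‖ ≤ (1 + 3√d/c⁴) ‖P − Q‖. In other words, the gradient ∇f_D(X) = X − X⁻³ of the symmetric Dirichlet energy is locally Lipschitz on symmetric positive definite matrices with explicit constant F = 1 + 3√d/c⁴. -/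

import Mathlib

open Matrix

/-- Frobenius norm `‖X‖ = (trace(Xᵀ X))^{1/2}`. -/
noncomputable def frobNorm {d : ℕ} (X : Matrix (Fin d) (Fin d) ℝ) : ℝ :=
  Real.sqrt (Matrix.trace (Xᵀ * X))

attribute [local instance] Matrix.frobeniusNormedAddCommGroup

variable {d : ℕ}

lemma trace_transpose_mul (X : Matrix (Fin d) (Fin d) ℝ) :
    Matrix.trace (Xᵀ * X) = ∑ i, ∑ j, (X i j) ^ 2 := by
  rw [Matrix.trace]
  simp only [Matrix.diag, Matrix.mul_apply, Matrix.transpose_apply, ← pow_two]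
  exact Finset.sum_comm

lemma norm_eq_sqrt (X : Matrix (Fin d) (Fin d) ℝ) :
    ‖X‖ = Real.sqrt (∑ i, ∑ j, (X i j) ^ 2) := by
  rw [Matrix.frobenius_norm_def, Real.sqrt_eq_rpow]
  congr 1
  simp [Real.norm_eq_abs, sq_abs]

lemma frobNorm_eq_norm (X : Matrix (Fin d) (Fin d) ℝ) : frobNorm X = ‖X‖ := by
  rw [frobNorm, trace_transpose_mul, norm_eq_sqrt]

lemma norm_orth_mul {U : Matrix (Fin d) (Fin d) ℝ} (hU : Uᵀ * U = 1)
    (X : Matrix (Fin d) (Fin d) ℝ) : ‖U * X‖ = ‖X‖ := by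
  rw [← frobNorm_eq_norm, ← frobNorm_eq_norm, frobNorm, frobNorm, Matrix.transpose_mul,
    mul_assoc, ← mul_assoc Uᵀ U X, hU, one_mul]

lemma norm_mul_orth {U : Matrix (Fin d) (Fin d) ℝ} (hU : U * Uᵀ = 1)
    (X : Matrix (Fin d) (Fin d) ℝ) : ‖X * U‖ = ‖X‖ := by
  rw [← frobNorm_eq_norm, ← frobNorm_eq_norm, frobNorm, frobNorm]
  congr 1
  have h1 : (X * U)ᵀ * (X * U) = Uᵀ * (Xᵀ * X) * U := by
    rw [Matrix.transpose_mul]; noncomm_ring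
  rw [h1, Matrix.trace_mul_cycle, ← mul_assoc, hU, one_mul]

lemma norm_diagonal_mul_le {v : Fin d → ℝ} {k : ℝ} (hk : 0 ≤ k) (hv : ∀ i, |v i| ≤ k)
    (X : Matrix (Fin d) (Fin d) ℝ) : ‖Matrix.diagonal v * X‖ ≤ k * ‖X‖ := by
  rw [norm_eq_sqrt, norm_eq_sqrt, ← Real.sqrt_sq hk, ← Real.sqrt_mul (sq_nonneg k)]
  apply Real.sqrt_le_sqrt
  rw [Finset.mul_sum]
  refine Finset.sum_le_sum fun i _ => ?_
  rw [Finset.mul_sum]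
  refine Finset.sum_le_sum fun j _ => ?_
  rw [Matrix.diagonal_mul, mul_pow]
  have h2 : (v i) ^ 2 ≤ k ^ 2 := by
    rw [← sq_abs]; exact pow_le_pow_left₀ (abs_nonneg _) (hv i) 2
  nlinarith [sq_nonneg (X i j)]

lemma norm_mul_diagonal_le {v : Fin d → ℝ} {k : ℝ} (hk : 0 ≤ k) (hv : ∀ i, |v i| ≤ k)
    (X : Matrix (Fin d) (Fin d) ℝ) : ‖X * Matrix.diagonal v‖ ≤ k * ‖X‖ := by
  rw [norm_eq_sqrt, norm_eq_sqrt, ← Real.sqrt_sq hk, ← Real.sqrt_mul (sq_nonneg k)]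
  apply Real.sqrt_le_sqrt
  rw [Finset.mul_sum]
  refine Finset.sum_le_sum fun i _ => ?_
  rw [Finset.mul_sum]
  refine Finset.sum_le_sum fun j _ => ?_
  rw [Matrix.mul_diagonal, mul_pow]
  have h2 : (v j) ^ 2 ≤ k ^ 2 := by
    rw [← sq_abs]; exact pow_le_pow_left₀ (abs_nonneg _) (hv j) 2
  nlinarith [sq_nonneg (X i j)]

lemma frob_norm_diagonal (v : Fin d → ℝ) :
    ‖Matrix.diagonal v‖ = Real.sqrt (∑ i, (v i) ^ 2) := by
  rw [norm_eq_sqrt]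
  congr 1
  refine Finset.sum_congr rfl fun i _ => ?_
  rw [Finset.sum_eq_single i]
  · rw [Matrix.diagonal_apply_eq]
  · intro j _ hj
    rw [Matrix.diagonal_apply_ne' _ hj]
    ring
  · simp

lemma conjmul {U A B : Matrix (Fin d) (Fin d) ℝ} (hU : Uᵀ * U = 1) :
    (U * A * Uᵀ) * (U * B * Uᵀ) = U * (A * B) * Uᵀ := by
  have h : (U * A * Uᵀ) * (U * B * Uᵀ) = U * (A * ((Uᵀ * U) * (B * Uᵀ))) := by
    noncomm_ring
  rw [h, hU, one_mul]
  noncomm_ring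

lemma posdef_decomp {P : Matrix (Fin d) (Fin d) ℝ} (hP : P.PosDef) :
    ∃ (U : Matrix (Fin d) (Fin d) ℝ) (lam : Fin d → ℝ),
      Uᵀ * U = 1 ∧ U * Uᵀ = 1 ∧ (∀ i, 0 < lam i) ∧ P = U * Matrix.diagonal lam * Uᵀ := by
  have hH := hP.1
  refine ⟨hH.eigenvectorUnitary, hH.eigenvalues, ?_, ?_, hP.eigenvalues_pos, ?_⟩
  · have := Matrix.mem_unitaryGroup_iff'.mp (hH.eigenvectorUnitary).2
    rwa [Matrix.star_eq_conjTranspose, Matrix.conjTranspose_eq_transpose_of_trivial] at this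
  · have := Matrix.mem_unitaryGroup_iff.mp (hH.eigenvectorUnitary).2
    rwa [Matrix.star_eq_conjTranspose, Matrix.conjTranspose_eq_transpose_of_trivial] at this
  · have := hH.spectral_theorem
    rwa [Unitary.conjStarAlgAut_apply, Matrix.star_eq_conjTranspose, Matrix.conjTranspose_eq_transpose_of_trivial,
      RCLike.ofReal_real_eq_id, Function.id_comp] at this

lemma eig_lower {B c lam : ℝ} (hB : 0 ≤ B) (hc : 0 < c)
    (hroot : c ^ 4 + B * c ^ 3 - 1 = 0) (hlam : 0 < lam)
    (h : |lam - lam⁻¹ ^ 3| ≤ B) : c ≤ lam := by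
  by_contra hlt
  push_neg at hlt
  have h1 : lam⁻¹ ^ 3 - lam ≤ B := by
    have := abs_le.mp h
    linarith [this.1]
  have hinv : lam⁻¹ ^ 3 * lam ^ 3 = 1 := by
    field_simp
  have h2 : 1 - lam ^ 4 ≤ B * lam ^ 3 := by
    have := mul_le_mul_of_nonneg_right h1 (le_of_lt (pow_pos hlam 3))
    nlinarith [pow_pos hlam 3]
  have h3 : lam ^ 4 < c ^ 4 := by
    exact pow_lt_pow_left₀ hlt hlam.le (by norm_num)
  have h4 : B * lam ^ 3 ≤ B * c ^ 3 :=
    mul_le_mul_of_nonneg_left (pow_le_pow_left₀ hlam.le hlt.le 3) hB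
  linarith

lemma posdef_bounds {P : Matrix (Fin d) (Fin d) ℝ} (hP : P.PosDef)
    {B c : ℝ} (hB : 0 ≤ B) (hc : 0 < c) (hroot : c ^ 4 + B * c ^ 3 - 1 = 0)
    (hgrad : ‖P - (P⁻¹) ^ 3‖ ≤ B) :
    (∀ X, ‖P⁻¹ * X‖ ≤ c⁻¹ * ‖X‖) ∧ (∀ X, ‖X * P⁻¹‖ ≤ c⁻¹ * ‖X‖) := by
  obtain ⟨U, lam, hU1, hU2, hpos, hdec⟩ := posdef_decomp hP
  have hUt1 : (Uᵀ)ᵀ * Uᵀ = 1 := by rwa [Matrix.transpose_transpose]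
  have hUt2 : Uᵀ * (Uᵀ)ᵀ = 1 := by rwa [Matrix.transpose_transpose]
  -- inverse formula
  have hPinv : P⁻¹ = U * Matrix.diagonal (fun i => (lam i)⁻¹) * Uᵀ := by
    apply Matrix.inv_eq_right_inv
    rw [hdec, conjmul hU1, Matrix.diagonal_mul_diagonal]
    have : (fun i => lam i * (lam i)⁻¹) = fun _ => (1 : ℝ) := by
      funext i; exact mul_inv_cancel₀ (hpos i).ne'
    rw [this, Matrix.diagonal_one, mul_one, hU2]
  -- cube formula
  have hPinv3 : (P⁻¹) ^ 3 =
      U * Matrix.diagonal (fun i => (lam i)⁻¹ ^ 3) * Uᵀ := by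
    have e3 : (P⁻¹) ^ 3 = P⁻¹ * P⁻¹ * P⁻¹ := by rw [pow_succ, sq]
    rw [e3, hPinv, conjmul hU1, conjmul hU1, Matrix.diagonal_mul_diagonal,
      Matrix.diagonal_mul_diagonal]
    congr 1
    · congr 1
      funext i
      ring
  -- norm of conjugated matrix
  have hconj : ∀ M : Matrix (Fin d) (Fin d) ℝ, ‖U * M * Uᵀ‖ = ‖M‖ := by
    intro M
    rw [mul_assoc, norm_orth_mul hU1, norm_mul_orth hUt2]
  -- gradient eigen bound
  have hdiff : P - (P⁻¹) ^ 3 =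
      U * Matrix.diagonal (fun i => lam i - (lam i)⁻¹ ^ 3) * Uᵀ := by
    rw [hPinv3]
    conv_lhs => rw [hdec]
    have : Matrix.diagonal (fun i => lam i - (lam i)⁻¹ ^ 3) =
        Matrix.diagonal lam - Matrix.diagonal (fun i => (lam i)⁻¹ ^ 3) := by
      rw [Matrix.diagonal_sub]
    rw [this]
    noncomm_ring
  have hsum : Real.sqrt (∑ i, (lam i - (lam i)⁻¹ ^ 3) ^ 2) ≤ B := by
    rw [← frob_norm_diagonal, ← hconj, ← hdiff]; exact hgrad
  have hsum2 : ∑ i, (lam i - (lam i)⁻¹ ^ 3) ^ 2 ≤ B ^ 2 := by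
    have h0 : (0:ℝ) ≤ ∑ i, (lam i - (lam i)⁻¹ ^ 3) ^ 2 :=
      Finset.sum_nonneg fun i _ => sq_nonneg _
    nlinarith [Real.sq_sqrt h0, Real.sqrt_nonneg (∑ i, (lam i - (lam i)⁻¹ ^ 3) ^ 2)]
  have heig : ∀ i, c ≤ lam i := by
    intro i
    have hterm : (lam i - (lam i)⁻¹ ^ 3) ^ 2 ≤ B ^ 2 := by
      have := Finset.single_le_sum (f := fun i => (lam i - (lam i)⁻¹ ^ 3) ^ 2)
        (fun j _ => sq_nonneg _) (Finset.mem_univ i)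
      linarith
    have habs : |lam i - (lam i)⁻¹ ^ 3| ≤ B := by
      rw [← Real.sqrt_sq_eq_abs, ← Real.sqrt_sq hB]
      exact Real.sqrt_le_sqrt hterm
    exact eig_lower hB hc hroot (hpos i) habs
  have hvbound : ∀ i, |(lam i)⁻¹| ≤ c⁻¹ := by
    intro i
    rw [abs_of_pos (inv_pos.mpr (hpos i))]
    exact inv_anti₀ hc (heig i)
  constructor
  · intro X
    calc ‖P⁻¹ * X‖ = ‖Matrix.diagonal (fun i => (lam i)⁻¹) * (Uᵀ * X)‖ := by
          rw [hPinv, mul_assoc, mul_assoc, norm_orth_mul hU1]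
      _ ≤ c⁻¹ * ‖Uᵀ * X‖ :=
          norm_diagonal_mul_le (inv_nonneg.mpr hc.le) hvbound _
      _ = c⁻¹ * ‖X‖ := by rw [norm_orth_mul hUt1]
  · intro X
    calc ‖X * P⁻¹‖ = ‖X * U * Matrix.diagonal (fun i => (lam i)⁻¹)‖ := by
          rw [hPinv, ← mul_assoc, ← mul_assoc, norm_mul_orth hUt2]
      _ ≤ c⁻¹ * ‖X * U‖ :=
          norm_mul_diagonal_le (inv_nonneg.mpr hc.le) hvbound _
      _ = c⁻¹ * ‖X‖ := by rw [norm_mul_orth hU2]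


/-- Lemma 5.1, symmetric Dirichlet case: if `c > 0` satisfies
`c⁴ + Bc³ − 1 = 0` and `P`, `Q` are symmetric positive definite with
`‖P − P⁻³‖ ≤ B` and `‖Q − Q⁻³‖ ≤ B` (Frobenius norm, `P⁻³ = (P⁻¹)³`), then the
gradient `∇f_D(X) = X − X⁻³` of the symmetric Dirichlet energy satisfies
`‖(P − P⁻³) − (Q − Q⁻³)‖ ≤ (1 + 3√d/c⁴) ‖P − Q‖`. -/
theorem gradient_local_lipschitz_symmetric_dirichlet (d : ℕ) (B c : ℝ) (hB : 0 ≤ B)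
    (hc : 0 < c) (hroot : c ^ 4 + B * c ^ 3 - 1 = 0)
    (P Q : Matrix (Fin d) (Fin d) ℝ) (hP : P.PosDef) (hQ : Q.PosDef)
    (hPgrad : frobNorm (P - (P⁻¹) ^ 3) ≤ B) (hQgrad : frobNorm (Q - (Q⁻¹) ^ 3) ≤ B) :
    frobNorm ((P - (P⁻¹) ^ 3) - (Q - (Q⁻¹) ^ 3)) ≤
      (1 + 3 * Real.sqrt d / c ^ 4) * frobNorm (P - Q) := by
  rcases Nat.eq_zero_or_pos d with hd | hd
  · subst hd
    simp [frobNorm, Matrix.trace]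
  rw [frobNorm_eq_norm] at hPgrad hQgrad
  rw [frobNorm_eq_norm, frobNorm_eq_norm]
  obtain ⟨hPL, _⟩ := posdef_bounds hP hB hc hroot hPgrad
  obtain ⟨_, hQR⟩ := posdef_bounds hQ hB hc hroot hQgrad
  have hdetP : IsUnit P.det := isUnit_iff_ne_zero.mpr hP.det_pos.ne'
  have hdetQ : IsUnit Q.det := isUnit_iff_ne_zero.mpr hQ.det_pos.ne'
  have eAP : P⁻¹ * P = 1 := Matrix.nonsing_inv_mul P hdetP
  have eQB : Q * Q⁻¹ = 1 := Matrix.mul_nonsing_inv Q hdetQ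
  have hAD : P⁻¹ * ((Q - P) * Q⁻¹) = P⁻¹ - Q⁻¹ := by
    rw [sub_mul, mul_sub, eQB, mul_one, ← mul_assoc, eAP, one_mul]
  have key : (P⁻¹) ^ 3 - (Q⁻¹) ^ 3 =
      P⁻¹ * (P⁻¹ * (P⁻¹ * ((Q - P) * Q⁻¹)))
        + P⁻¹ * (P⁻¹ * (((Q - P) * Q⁻¹) * Q⁻¹))
        + P⁻¹ * ((((Q - P) * Q⁻¹) * Q⁻¹) * Q⁻¹) := by
    have h2 : P⁻¹ * (((Q - P) * Q⁻¹) * Q⁻¹) = (P⁻¹ - Q⁻¹) * Q⁻¹ := by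
      rw [← mul_assoc, hAD]
    have h3 : P⁻¹ * ((((Q - P) * Q⁻¹) * Q⁻¹) * Q⁻¹) = ((P⁻¹ - Q⁻¹) * Q⁻¹) * Q⁻¹ := by
      rw [← mul_assoc, ← mul_assoc, hAD]
    rw [hAD, h2, h3]
    noncomm_ring
  have hcinv : (0:ℝ) ≤ c⁻¹ := inv_nonneg.mpr hc.le
  have stepL : ∀ (X : Matrix (Fin d) (Fin d) ℝ) (r : ℝ), ‖X‖ ≤ r → ‖P⁻¹ * X‖ ≤ c⁻¹ * r :=
    fun X r h => le_trans (hPL X) (mul_le_mul_of_nonneg_left h hcinv)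
  have stepR : ∀ (X : Matrix (Fin d) (Fin d) ℝ) (r : ℝ), ‖X‖ ≤ r → ‖X * Q⁻¹‖ ≤ c⁻¹ * r :=
    fun X r h => le_trans (hQR X) (mul_le_mul_of_nonneg_left h hcinv)
  have base : ‖(Q - P) * Q⁻¹‖ ≤ c⁻¹ * ‖Q - P‖ := hQR _
  have n1 := stepL _ _ (stepL _ _ (stepL _ _ base))
  have n2 := stepL _ _ (stepL _ _ (stepR _ _ base))
  have n3 := stepL _ _ (stepR _ _ (stepR _ _ base))
  have hQPnorm : ‖Q - P‖ = ‖P - Q‖ := norm_sub_rev Q P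
  have hcube : ‖(P⁻¹) ^ 3 - (Q⁻¹) ^ 3‖ ≤ 3 * c⁻¹ ^ 4 * ‖P - Q‖ := by
    rw [key]
    calc ‖_ + _ + _‖ ≤ ‖P⁻¹ * (P⁻¹ * (P⁻¹ * ((Q - P) * Q⁻¹)))
          + P⁻¹ * (P⁻¹ * (((Q - P) * Q⁻¹) * Q⁻¹))‖
          + ‖P⁻¹ * ((((Q - P) * Q⁻¹) * Q⁻¹) * Q⁻¹)‖ := norm_add_le _ _
      _ ≤ ‖P⁻¹ * (P⁻¹ * (P⁻¹ * ((Q - P) * Q⁻¹)))‖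
          + ‖P⁻¹ * (P⁻¹ * (((Q - P) * Q⁻¹) * Q⁻¹))‖
          + ‖P⁻¹ * ((((Q - P) * Q⁻¹) * Q⁻¹) * Q⁻¹)‖ := by
            linarith [norm_add_le (P⁻¹ * (P⁻¹ * (P⁻¹ * ((Q - P) * Q⁻¹))))
              (P⁻¹ * (P⁻¹ * (((Q - P) * Q⁻¹) * Q⁻¹)))]
      _ ≤ 3 * c⁻¹ ^ 4 * ‖P - Q‖ := by
            rw [hQPnorm] at n1 n2 n3
            nlinarith [n1, n2, n3]
  have hsplit : (P - (P⁻¹) ^ 3) - (Q - (Q⁻¹) ^ 3)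
      = (P - Q) - ((P⁻¹) ^ 3 - (Q⁻¹) ^ 3) := by abel
  have hmain : ‖(P - (P⁻¹) ^ 3) - (Q - (Q⁻¹) ^ 3)‖ ≤ (1 + 3 * c⁻¹ ^ 4) * ‖P - Q‖ := by
    rw [hsplit]
    calc ‖(P - Q) - ((P⁻¹) ^ 3 - (Q⁻¹) ^ 3)‖
        ≤ ‖P - Q‖ + ‖(P⁻¹) ^ 3 - (Q⁻¹) ^ 3‖ := norm_sub_le _ _
      _ ≤ (1 + 3 * c⁻¹ ^ 4) * ‖P - Q‖ := by nlinarith [hcube, norm_nonneg (P - Q)]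
  refine le_trans hmain (mul_le_mul_of_nonneg_right ?_ (norm_nonneg _))
  have hd1 : (1:ℝ) ≤ Real.sqrt d := by
    rw [show (1:ℝ) = Real.sqrt 1 by simp]
    exact Real.sqrt_le_sqrt (by exact_mod_cast hd)
  have h4 : (0:ℝ) < c ^ 4 := pow_pos hc 4
  have hinv4 : c⁻¹ ^ 4 = 1 / c ^ 4 := by field_simp
  rw [hinv4, show 3 * Real.sqrt d / c ^ 4 = 3 * Real.sqrt d * (1/c^4) by ring]
  have hpos : (0:ℝ) ≤ 1/c^4 := by positivity
  nlinarith [hd1, hpos]
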